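/- Let R = F_2[x_1, ..., x_k] and for each i ≥ 0 let Q_i : R → R be the F_2-linear derivation determined by Q_i(x_j) = x_j^{2^{i+1}}. Then for n+1 ≤ m ≤ k, the composite Q_n Q_{n-1} ⋯ Q_1 Q_0 applied to x_1 x_2 ⋯ x_m equals the sum, over all bijections (j_1, ..., j_m) from {1,...,m} to the multiset {2^{n+1}, 2^n, ..., 2, 1, ..., 1} (with m−(n+1) ones), of the monomial x_1^{j_1} x_2^{j_2} ⋯ x_m^{j_m}. -/

import Mathlib

open MvPolynomial

/-- The composite `Q n ∘ Q (n-1) ∘ ⋯ ∘ Q 0`. -/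
def compQ {A : Type*} (Q : ℕ → A → A) : ℕ → A → A
  | 0 => Q 0
  | n + 1 => Q (n + 1) ∘ compQ Q n

section aux

theorem derivation_finset_prod {R A : Type*} [CommRing R] [CommRing A] [Algebra R A]
    (D : Derivation R A A) {ι : Type*} [DecidableEq ι] (s : Finset ι) (f : ι → A) :
    D (∏ i ∈ s, f i) = ∑ i ∈ s, (∏ j ∈ s.erase i, f j) * D (f i) := by
  induction s using Finset.induction_on with
  | empty => simp
  | @insert a s ha ih =>
    rw [Finset.prod_insert ha, D.leibniz, ih, Finset.sum_insert ha, Finset.erase_insert ha,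
      smul_eq_mul, smul_eq_mul, Finset.mul_sum, add_comm]
    congr 1
    refine Finset.sum_congr rfl fun i hi => ?_
    rw [Finset.erase_insert_of_ne (by rintro rfl; exact ha hi),
      Finset.prod_insert (fun h => ha (Finset.mem_of_mem_erase h)), mul_assoc]

/-- The exponent function encoded in the statement. -/
noncomputable def Efun {n m : ℕ} (g : Fin (n + 1) → Fin m) (j : Fin m) : ℕ :=
  if h : ∃ t : Fin (n + 1), g t = j then 2 ^ ((h.choose : ℕ) + 1) else 1

theorem Efun_eq {n m : ℕ} {g : Fin (n + 1) → Fin m} (hg : Function.Injective g)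
    {t : Fin (n + 1)} {j : Fin m} (h : g t = j) : Efun g j = 2 ^ ((t : ℕ) + 1) := by
  have h' : ∃ t, g t = j := ⟨t, h⟩
  rw [Efun, dif_pos h']
  have : h'.choose = t := hg (h'.choose_spec.trans h.symm)
  rw [this]

theorem Efun_not {n m : ℕ} {g : Fin (n + 1) → Fin m} {j : Fin m}
    (h : ∀ t, g t ≠ j) : Efun g j = 1 :=
  dif_neg (fun ⟨t, ht⟩ => h t ht)

theorem Efun_one_or_even {n m : ℕ} (g : Fin (n + 1) → Fin m) (hg : Function.Injective g)
    (j : Fin m) : Efun g j = 1 ∨ Even (Efun g j) := by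
  by_cases h : ∃ t, g t = j
  · obtain ⟨t, ht⟩ := h
    right
    rw [Efun_eq hg ht]
    exact (Nat.even_pow' (by omega)).mpr even_two
  · left; exact Efun_not (fun t ht => h ⟨t, ht⟩)

theorem Efun_eq_one_iff {n m : ℕ} {g : Fin (n + 1) → Fin m} (hg : Function.Injective g)
    {j : Fin m} : Efun g j = 1 ↔ ∀ t, g t ≠ j := by
  constructor
  · intro h1 t ht
    rw [Efun_eq hg ht] at h1
    have : 1 < 2 ^ ((t : ℕ) + 1) := Nat.one_lt_two_pow (by omega)
    omega
  · exact Efun_not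

theorem snoc_injective {n m : ℕ} {g : Fin (n + 1) → Fin m} {j : Fin m}
    (hg : Function.Injective g) (hj : ∀ t, g t ≠ j) :
    Function.Injective (Fin.snoc g j : Fin (n + 2) → Fin m) := by
  intro a b hab
  induction a using Fin.lastCases with
  | last =>
    induction b using Fin.lastCases with
    | last => rfl
    | cast b =>
      rw [Fin.snoc_last, Fin.snoc_castSucc] at hab
      exact absurd hab.symm (hj b)
  | cast a =>
    induction b using Fin.lastCases with
    | last =>
      rw [Fin.snoc_last, Fin.snoc_castSucc] at hab
      exact absurd hab (hj a)
    | cast b =>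
      rw [Fin.snoc_castSucc, Fin.snoc_castSucc] at hab
      exact congrArg Fin.castSucc (hg hab)

theorem Efun_snoc {n m : ℕ} {g : Fin (n + 1) → Fin m} {j : Fin m}
    (hg : Function.Injective g) (hj : ∀ t, g t ≠ j) :
    Function.update (Efun g) j (2 ^ (n + 2)) = Efun (Fin.snoc g j : Fin (n + 2) → Fin m) := by
  have hsnoc := snoc_injective hg hj
  funext j'
  rcases eq_or_ne j' j with rfl | hne
  · rw [Function.update_self]
    have : (Fin.snoc g j' : Fin (n + 2) → Fin m) (Fin.last (n + 1)) = j' := Fin.snoc_last _ _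
    rw [Efun_eq hsnoc this, Fin.val_last]
  · rw [Function.update_of_ne hne]
    by_cases h : ∃ t, g t = j'
    · obtain ⟨t, ht⟩ := h
      have : (Fin.snoc g j : Fin (n + 2) → Fin m) t.castSucc = j' := by
        rw [Fin.snoc_castSucc]; exact ht
      rw [Efun_eq hg ht, Efun_eq hsnoc this, Fin.coe_castSucc]
    · rw [Efun_not (fun t ht => h ⟨t, ht⟩), Efun_not]
      intro t ht
      induction t using Fin.lastCases with
      | last => rw [Fin.snoc_last] at ht; exact hne ht.symm
      | cast t => rw [Fin.snoc_castSucc] at ht; exact h ⟨t, ht⟩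

variable {k : ℕ} (Q : ℕ → Derivation (ZMod 2) (MvPolynomial (Fin k) (ZMod 2))
      (MvPolynomial (Fin k) (ZMod 2)))

theorem Q_pow_even (hQ : ∀ (i : ℕ) (j : Fin k), Q i (X j) = X j ^ 2 ^ (i + 1))
    (i : ℕ) (j : Fin k) {e : ℕ} (he : Even e) : Q i (X j ^ e) = 0 := by
  rw [Derivation.leibniz_pow]
  obtain ⟨l, rfl⟩ := he
  rw [add_smul]
  exact CharTwo.add_self_eq_zero _

theorem key {m : ℕ} (hmk : m ≤ k) (hQ : ∀ (i : ℕ) (j : Fin k), Q i (X j) = X j ^ 2 ^ (i + 1))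
    (i : ℕ) (e : Fin m → ℕ) (he : ∀ j, e j = 1 ∨ Even (e j)) :
    Q i (∏ j : Fin m, X (Fin.castLE hmk j) ^ e j)
      = ∑ j ∈ Finset.univ.filter (fun j => e j = 1),
          ∏ j' : Fin m, X (Fin.castLE hmk j') ^ (Function.update e j (2 ^ (i + 1)) j') := by
  rw [derivation_finset_prod]
  rw [← Finset.sum_filter_add_sum_filter_not Finset.univ (fun j => e j = 1)]
  have h2 : ∑ j ∈ Finset.univ.filter (fun j => ¬ e j = 1),
      (∏ j' ∈ Finset.univ.erase j, X (Fin.castLE hmk j') ^ e j')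
        * Q i (X (Fin.castLE hmk j) ^ e j) = 0 := by
    refine Finset.sum_eq_zero fun j hj => ?_
    have hne : ¬ e j = 1 := (Finset.mem_filter.mp hj).2
    have heven : Even (e j) := (he j).resolve_left hne
    rw [Q_pow_even Q hQ i _ heven, mul_zero]
  rw [h2, add_zero]
  refine Finset.sum_congr rfl fun j hj => ?_
  have h1 : e j = 1 := (Finset.mem_filter.mp hj).2
  rw [h1, pow_one, hQ]
  conv_rhs => rw [← Finset.prod_erase_mul Finset.univ _ (Finset.mem_univ j)]
  rw [Function.update_self]
  congr 1
  refine Finset.prod_congr rfl fun j' hj' => ?_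
  rw [Function.update_of_ne (Finset.ne_of_mem_erase hj')]

theorem main {m : ℕ} (hmk : m ≤ k)
    (hQ : ∀ (i : ℕ) (j : Fin k), Q i (X j) = X j ^ 2 ^ (i + 1)) (n : ℕ) :
    compQ (fun i f => Q i f) n (∏ i : Fin m, X (Fin.castLE hmk i))
      = ∑ g ∈ Finset.univ.filter
          (fun g : Fin (n + 1) → Fin m => Function.Injective g),
          ∏ j : Fin m, X (Fin.castLE hmk j) ^ Efun g j := by
  induction n with
  | zero =>
    show Q 0 (∏ i : Fin m, X (Fin.castLE hmk i)) = _
    have h0 : (∏ i : Fin m, X (Fin.castLE hmk i) : MvPolynomial (Fin k) (ZMod 2))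
        = ∏ i : Fin m, X (Fin.castLE hmk i) ^ (fun _ : Fin m => 1) i := by
      simp
    rw [h0, key Q hmk hQ 0 _ (fun j => Or.inl rfl)]
    refine Finset.sum_nbij' (fun j => fun _ : Fin 1 => j) (fun g => g 0)
      ?_ ?_ ?_ ?_ ?_
    · intro a _
      refine Finset.mem_filter.mpr ⟨Finset.mem_univ _, fun x y _ => Fin.ext (by omega)⟩
    · intro g _; simp
    · intro a _; rfl
    · intro g _
      funext t
      have : t = 0 := Fin.ext (by have := t.isLt; omega)
      rw [this]
    · intro j _
      refine Finset.prod_congr rfl fun j' _ => ?_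
      congr 1
      have hinj : Function.Injective (fun _ : Fin (0 + 1) => j) :=
        fun x y _ => Fin.ext (by omega)
      rcases eq_or_ne j' j with rfl | hne
      · rw [Function.update_self, Efun_eq (t := (0 : Fin (0 + 1))) hinj rfl]
        rfl
      · rw [Function.update_of_ne hne, Efun_not (fun t ht => hne ht.symm)]
  | succ n ih =>
    show Q (n + 1) (compQ (fun i f => Q i f) n (∏ i : Fin m, X (Fin.castLE hmk i))) = _
    rw [ih, map_sum]
    have step : ∀ g ∈ Finset.univ.filter
        (fun g : Fin (n + 1) → Fin m => Function.Injective g),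
        Q (n + 1) (∏ j : Fin m, X (Fin.castLE hmk j) ^ Efun g j)
          = ∑ j ∈ Finset.univ.filter (fun j => Efun g j = 1),
              ∏ j' : Fin m, X (Fin.castLE hmk j') ^
                Efun (Fin.snoc g j : Fin (n + 2) → Fin m) j' := by
      intro g hg
      have hginj : Function.Injective g := (Finset.mem_filter.mp hg).2
      rw [key Q hmk hQ (n + 1) _ (Efun_one_or_even g hginj)]
      refine Finset.sum_congr rfl fun j hj => ?_
      have h1 : Efun g j = 1 := (Finset.mem_filter.mp hj).2
      have hj' : ∀ t, g t ≠ j := (Efun_eq_one_iff hginj).mp h1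
      refine Finset.prod_congr rfl fun j' _ => ?_
      congr 1
      exact congrFun (Efun_snoc hginj hj') j'
    rw [Finset.sum_congr rfl step, Finset.sum_sigma']
    refine Finset.sum_nbij' (fun p => (Fin.snoc p.1 p.2 : Fin (n + 2) → Fin m))
      (fun g' => ⟨Fin.init g', g' (Fin.last (n + 1))⟩) ?_ ?_ ?_ ?_ ?_
    · rintro ⟨g, j⟩ hp
      rw [Finset.mem_sigma] at hp
      obtain ⟨hg, hj⟩ := hp
      have hginj : Function.Injective g := (Finset.mem_filter.mp hg).2
      have hjr : ∀ t, g t ≠ j :=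
        (Efun_eq_one_iff hginj).mp (Finset.mem_filter.mp hj).2
      exact Finset.mem_filter.mpr ⟨Finset.mem_univ _, snoc_injective hginj hjr⟩
    · intro g' hg'
      have hinj : Function.Injective g' := (Finset.mem_filter.mp hg').2
      have hinit : Function.Injective (Fin.init g') := fun a b hab =>
        Fin.castSucc_injective _ (hinj hab)
      refine Finset.mem_sigma.mpr ⟨Finset.mem_filter.mpr ⟨Finset.mem_univ _, hinit⟩, ?_⟩
      refine Finset.mem_filter.mpr ⟨Finset.mem_univ _, (Efun_eq_one_iff hinit).mpr ?_⟩
      intro t ht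
      exact absurd (hinj ht) (Fin.ne_last_of_lt (Fin.castSucc_lt_last t))
    · rintro ⟨g, j⟩ _
      simp [Fin.init_snoc, Fin.snoc_last]
    · intro g' _
      exact Fin.snoc_init_self g'
    · rintro ⟨g, j⟩ _
      rfl

end aux

theorem stmt_6 (k n m : ℕ) (hnm : n + 1 ≤ m) (hmk : m ≤ k)
    (Q : ℕ → Derivation (ZMod 2) (MvPolynomial (Fin k) (ZMod 2))
      (MvPolynomial (Fin k) (ZMod 2)))
    (hQ : ∀ (i : ℕ) (j : Fin k), Q i (X j) = X j ^ 2 ^ (i + 1)) :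
    compQ (fun i f => Q i f) n (∏ i : Fin m, X (Fin.castLE hmk i))
      = ∑ g ∈ Finset.univ.filter
          (fun g : Fin (n + 1) → Fin m => Function.Injective g),
          ∏ j : Fin m,
            X (Fin.castLE hmk j) ^
              (if h : ∃ t : Fin (n + 1), g t = j then 2 ^ ((h.choose : ℕ) + 1) else 1) := by
  exact main Q hmk hQ n
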